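/- arXiv:2202.11633 — 5 statements merged into one kernel-verified Lean document; each statement's English description precedes it below -/
import Mathlib

section
/- The normalized weighted geometric mean minimizes the weighted sum of reverse Kullback–Leibler divergences: for positive probability density functions q_1,…,q_K on Θ and weights w_1,…,w_K ≥ 0 summing to 1 such that ∫_Θ ∏_k q_k(θ)^{w_k} dθ is finite and positive, the density q(θ) = c ∏_k q_k(θ)^{w_k}, with c the normalizing constant, satisfies Σ_k w_k D_KL(q ‖ q_k) ≤ Σ_k w_k D_KL(φ ‖ q_k) for every probability density φ on Θ. -/
open MeasureTheory

/-- The normalized weighted geometric mean minimizes the weighted sum of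
reverse Kullback–Leibler divergences. -/
theorem loglinear_pool_minimizes_reverse_KL
    {Θ : Type*} [MeasurableSpace Θ] (μ : Measure Θ) [SigmaFinite μ]
    {K : ℕ} (q : Fin K → Θ → ℝ) (w : Fin K → ℝ)
    (hqmeas : ∀ k, Measurable (q k)) (hqpos : ∀ k θ, 0 < q k θ)
    (hqint : ∀ k, ∫ θ, q k θ ∂μ = 1)
    (hwnn : ∀ k, 0 ≤ w k) (hwsum : ∑ k, w k = 1)
    (hZint : Integrable (fun θ => ∏ k, q k θ ^ w k) μ)
    (hZpos : 0 < ∫ θ, ∏ k, q k θ ^ w k ∂μ)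
    (φ : Θ → ℝ) (hφmeas : Measurable φ) (hφnn : ∀ θ, 0 ≤ φ θ)
    (hφint : ∫ θ, φ θ ∂μ = 1)
    (hKLint : ∀ k, Integrable (fun θ => φ θ * Real.log (φ θ / q k θ)) μ) :
    (let c : ℝ := (∫ θ, ∏ k, q k θ ^ w k ∂μ)⁻¹
     let qa : Θ → ℝ := fun θ => c * ∏ k, q k θ ^ w k
     ∑ k, w k * ∫ θ, qa θ * Real.log (qa θ / q k θ) ∂μ ≤
       ∑ k, w k * ∫ θ, φ θ * Real.log (φ θ / q k θ) ∂μ) := by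
  intro c qa
  have hc : c = (∫ θ, ∏ k, q k θ ^ w k ∂μ)⁻¹ := rfl
  have hqadef : qa = fun θ => c * ∏ k, q k θ ^ w k := rfl
  clear_value c qa
  set p : Θ → ℝ := fun θ => ∏ k, q k θ ^ w k with hpdef
  have hppos : ∀ θ, 0 < p θ := fun θ =>
    Finset.prod_pos fun k _ => Real.rpow_pos_of_pos (hqpos k θ) _
  have hcpos : 0 < c := by rw [hc]; exact inv_pos.mpr hZpos
  have hqapos : ∀ θ, 0 < qa θ := by
    rw [hqadef]; exact fun θ => mul_pos hcpos (hppos θ)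
  -- measurability
  have hpmeas : Measurable p := by
    apply Finset.measurable_prod
    intro k _
    have : (fun θ => q k θ ^ w k) = fun θ => Real.exp (Real.log (q k θ) * w k) := by
      funext θ; rw [Real.rpow_def_of_pos (hqpos k θ)]
    rw [this]
    exact Real.measurable_exp.comp ((hqmeas k).log.mul_const _)
  have hqameas : Measurable qa := by rw [hqadef]; exact hpmeas.const_mul c
  -- basic integrability
  have hφInt : Integrable φ μ := by
    by_contra h
    rw [integral_undef h] at hφint; norm_num at hφint
  have hqInt : ∀ k, Integrable (q k) μ := by
    intro k
    by_contra h
    have hk := hqint k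
    rw [integral_undef h] at hk; norm_num at hk
  have hqaInt : Integrable qa μ := by rw [hqadef]; exact hZint.const_mul c
  have hqaint1 : ∫ θ, qa θ ∂μ = 1 := by
    rw [hqadef, integral_const_mul, hc]
    exact inv_mul_cancel₀ hZpos.ne'
  -- pointwise key identity
  have hlogp : ∀ θ, ∑ k, w k * Real.log (q k θ) = Real.log (p θ) := by
    intro θ
    rw [hpdef]
    rw [Real.log_prod (fun k _ => (Real.rpow_pos_of_pos (hqpos k θ) _).ne')]
    exact Finset.sum_congr rfl fun k _ => (Real.log_rpow (hqpos k θ) _).symm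
  have key : ∀ (x : ℝ), 0 ≤ x → ∀ θ,
      ∑ k, w k * (x * Real.log (x / q k θ)) =
        x * Real.log (x / qa θ) + Real.log c * x := by
    intro x hx θ
    rcases eq_or_lt_of_le hx with h0 | hx
    · simp [← h0]
    · have hlogdiv : ∀ k, Real.log (x / q k θ) = Real.log x - Real.log (q k θ) :=
        fun k => Real.log_div hx.ne' (hqpos k θ).ne'
      simp only [hlogdiv]
      rw [Real.log_div hx.ne' (hqapos θ).ne']
      have hqalog : Real.log (qa θ) = Real.log c + Real.log (p θ) := by
        rw [hqadef]; exact Real.log_mul hcpos.ne' (hppos θ).ne'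
      have hsum : ∑ k, w k * (x * (Real.log x - Real.log (q k θ)))
          = (∑ k, w k) * (x * Real.log x) - x * ∑ k, w k * Real.log (q k θ) := by
        rw [Finset.sum_mul, Finset.mul_sum, ← Finset.sum_sub_distrib]
        exact Finset.sum_congr rfl fun k _ => by ring
      rw [hsum, hwsum, hlogp θ, hqalog]
      ring
  have e1 : ∀ θ, ∑ k, w k * (φ θ * Real.log (φ θ / q k θ)) =
      φ θ * Real.log (φ θ / qa θ) + Real.log c * φ θ := fun θ => key _ (hφnn θ) θ
  have e2 : ∀ θ, ∑ k, w k * (qa θ * Real.log (qa θ / q k θ)) = Real.log c * qa θ := by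
    intro θ
    rw [key _ (hqapos θ).le θ, div_self (hqapos θ).ne', Real.log_one, mul_zero, zero_add]
  -- integrability of φ side
  have hφlogInt : Integrable (fun θ => φ θ * Real.log (φ θ / qa θ)) μ := by
    have heq : (fun θ => φ θ * Real.log (φ θ / qa θ)) =
        fun θ => (∑ k, w k * (φ θ * Real.log (φ θ / q k θ))) - Real.log c * φ θ := by
      funext θ; rw [e1 θ]; ring
    rw [heq]
    exact (integrable_finset_sum _ fun k _ => (hKLint k).const_mul _).sub
      (hφInt.const_mul _)
  -- integrability of qa side
  have hfqaInt : ∀ k, Integrable (fun θ => w k * (qa θ * Real.log (qa θ / q k θ))) μ := by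
    intro k
    rcases eq_or_lt_of_le (hwnn k) with h0 | hw
    · simp only [← h0, zero_mul]
      exact integrable_zero _ _ _
    · set ε : ℝ := w k with hεdef
      set β : Fin K → ℝ := fun j => (1 + ε) * w j - (if j = k then ε else 0) with hβdef
      have hβnn : ∀ j, 0 ≤ β j := by
        intro j
        rw [hβdef]
        dsimp only
        split
        · rename_i hj
          rw [hj]
          nlinarith [hεdef, sq_nonneg (w k)]
        · simp only [sub_zero]
          exact mul_nonneg (by nlinarith) (hwnn j)
      have hβsum : ∑ j, β j = 1 := by
        rw [hβdef]
        rw [Finset.sum_sub_distrib, ← Finset.mul_sum, hwsum,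
          Finset.sum_ite_eq' Finset.univ k (fun _ => ε)]
        simp only [Finset.mem_univ, if_pos]
        ring
      -- the product identity
      have hprodid : ∀ θ, qa θ ^ (1 + ε) / q k θ ^ ε = c ^ (1 + ε) * ∏ j, q j θ ^ β j := by
        intro θ
        have h1 : qa θ ^ (1 + ε) = c ^ (1 + ε) * p θ ^ (1 + ε) := by
          rw [hqadef]; exact Real.mul_rpow hcpos.le (hppos θ).le
        have h2 : p θ ^ (1 + ε) = ∏ j, q j θ ^ (w j * (1 + ε)) := by
          rw [hpdef]
          rw [← Real.finset_prod_rpow _ _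
            (fun j _ => (Real.rpow_pos_of_pos (hqpos j θ) _).le)]
          exact Finset.prod_congr rfl fun j _ =>
            (Real.rpow_mul (hqpos j θ).le _ _).symm
        have h3 : ∏ j, q j θ ^ β j
            = (∏ j, q j θ ^ (w j * (1 + ε))) * (q k θ ^ ε)⁻¹ := by
          have hsplit : ∀ j : Fin K, q j θ ^ β j
              = q j θ ^ (w j * (1 + ε)) * q j θ ^ (-(if j = k then ε else 0)) := by
            intro j
            rw [← Real.rpow_add (hqpos j θ)]
            congr 1
            rw [hβdef]; ring
          rw [Finset.prod_congr rfl fun j _ => hsplit j, Finset.prod_mul_distrib]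
          congr 1
          rw [Finset.prod_eq_single k
            (fun j _ hj => by simp [if_neg hj])
            (fun h => absurd (Finset.mem_univ k) h)]
          rw [if_pos rfl, Real.rpow_neg (hqpos k θ).le]
        rw [h1, h2, h3, div_eq_mul_inv]
        ring
      -- upper bound
      have hub : ∀ θ, qa θ * Real.log (qa θ / q k θ) ≤
          ε⁻¹ * (c ^ (1 + ε) * ∑ j, β j * q j θ - qa θ) := by
        intro θ
        have ha : 0 < qa θ := hqapos θ
        have hb : 0 < q k θ := hqpos k θ
        have ht : 0 < qa θ / q k θ := div_pos ha hb
        have htε : 0 < (qa θ / q k θ) ^ ε := Real.rpow_pos_of_pos ht ε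
        have hlog : Real.log (qa θ / q k θ) ≤ ε⁻¹ * ((qa θ / q k θ) ^ ε - 1) := by
          have h1 : Real.log ((qa θ / q k θ) ^ ε) = ε * Real.log (qa θ / q k θ) :=
            Real.log_rpow ht ε
          have h2 := Real.log_le_sub_one_of_pos htε
          rw [h1] at h2
          calc Real.log (qa θ / q k θ) = ε⁻¹ * (ε * Real.log (qa θ / q k θ)) := by
                field_simp
            _ ≤ ε⁻¹ * ((qa θ / q k θ) ^ ε - 1) :=
                mul_le_mul_of_nonneg_left h2 (inv_pos.mpr hw).le
        have hstep : qa θ * (qa θ / q k θ) ^ ε = qa θ ^ (1 + ε) / q k θ ^ ε := by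
          rw [Real.div_rpow ha.le hb.le, Real.rpow_add ha, Real.rpow_one]
          ring
        have hamgm : ∏ j, q j θ ^ β j ≤ ∑ j, β j * q j θ :=
          Real.geom_mean_le_arith_mean_weighted Finset.univ β (fun j => q j θ)
            (fun j _ => hβnn j) hβsum (fun j _ => (hqpos j θ).le)
        have hcε : (0:ℝ) ≤ c ^ (1 + ε) := (Real.rpow_pos_of_pos hcpos _).le
        calc qa θ * Real.log (qa θ / q k θ)
            ≤ qa θ * (ε⁻¹ * ((qa θ / q k θ) ^ ε - 1)) :=
              mul_le_mul_of_nonneg_left hlog ha.le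
          _ = ε⁻¹ * (qa θ * (qa θ / q k θ) ^ ε - qa θ) := by ring
          _ = ε⁻¹ * (c ^ (1 + ε) * ∏ j, q j θ ^ β j - qa θ) := by
              rw [hstep, hprodid θ]
          _ ≤ ε⁻¹ * (c ^ (1 + ε) * ∑ j, β j * q j θ - qa θ) := by
              apply mul_le_mul_of_nonneg_left _ (inv_pos.mpr hw).le
              apply sub_le_sub_right
              exact mul_le_mul_of_nonneg_left hamgm hcε
      -- lower bound
      have hlb : ∀ θ, qa θ - q k θ ≤ qa θ * Real.log (qa θ / q k θ) := by
        intro θ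
        have ha : 0 < qa θ := hqapos θ
        have hb : 0 < q k θ := hqpos k θ
        have ht : 0 < q k θ / qa θ := div_pos hb ha
        have h2 := Real.log_le_sub_one_of_pos ht
        have hswap : Real.log (qa θ / q k θ) = - Real.log (q k θ / qa θ) := by
          rw [← Real.log_inv, inv_div]
        have hmul : qa θ * (q k θ / qa θ) = q k θ := mul_div_cancel₀ _ ha.ne'
        rw [hswap]
        nlinarith [mul_le_mul_of_nonneg_left h2 ha.le]
      -- dominating function
      have hUInt : Integrable
          (fun θ => ε⁻¹ * (c ^ (1 + ε) * ∑ j, β j * q j θ - qa θ)) μ := by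
        exact (((integrable_finset_sum _ fun j _ =>
          (hqInt j).const_mul (β j)).const_mul _).sub hqaInt).const_mul _
      have hLInt : Integrable (fun θ => qa θ - q k θ) μ := hqaInt.sub (hqInt k)
      have hfmeas : Measurable (fun θ => qa θ * Real.log (qa θ / q k θ)) :=
        hqameas.mul (hqameas.div (hqmeas k)).log
      have hInt : Integrable (fun θ => qa θ * Real.log (qa θ / q k θ)) μ := by
        apply Integrable.mono' (hLInt.abs.add hUInt.abs) hfmeas.aestronglyMeasurable
        filter_upwards with θ
        simp only [Pi.add_apply]
        rw [Real.norm_eq_abs, abs_le]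
        constructor
        · have h1 := hlb θ
          have h2 := neg_abs_le (qa θ - q k θ)
          have h3 := abs_nonneg (ε⁻¹ * (c ^ (1 + ε) * ∑ j, β j * q j θ - qa θ))
          linarith
        · have h1 := hub θ
          have h2 := le_abs_self (ε⁻¹ * (c ^ (1 + ε) * ∑ j, β j * q j θ - qa θ))
          have h3 := abs_nonneg (qa θ - q k θ)
          linarith
      exact hInt.const_mul _
  -- compute the left-hand side
  have hL : ∑ k, w k * ∫ θ, qa θ * Real.log (qa θ / q k θ) ∂μ = Real.log c := by
    calc ∑ k, w k * ∫ θ, qa θ * Real.log (qa θ / q k θ) ∂μ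
        = ∑ k, ∫ θ, w k * (qa θ * Real.log (qa θ / q k θ)) ∂μ := by
          exact Finset.sum_congr rfl fun k _ => (integral_const_mul _ _).symm
      _ = ∫ θ, ∑ k, w k * (qa θ * Real.log (qa θ / q k θ)) ∂μ :=
          (integral_finset_sum _ fun k _ => hfqaInt k).symm
      _ = ∫ θ, Real.log c * qa θ ∂μ := by
          rw [show (fun θ => ∑ k, w k * (qa θ * Real.log (qa θ / q k θ)))
            = fun θ => Real.log c * qa θ from funext e2]
      _ = Real.log c := by rw [integral_const_mul, hqaint1, mul_one]
  -- compute the right-hand side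
  have hR : ∑ k, w k * ∫ θ, φ θ * Real.log (φ θ / q k θ) ∂μ
      = (∫ θ, φ θ * Real.log (φ θ / qa θ) ∂μ) + Real.log c := by
    calc ∑ k, w k * ∫ θ, φ θ * Real.log (φ θ / q k θ) ∂μ
        = ∑ k, ∫ θ, w k * (φ θ * Real.log (φ θ / q k θ)) ∂μ := by
          exact Finset.sum_congr rfl fun k _ => (integral_const_mul _ _).symm
      _ = ∫ θ, ∑ k, w k * (φ θ * Real.log (φ θ / q k θ)) ∂μ :=
          (integral_finset_sum _ fun k _ => (hKLint k).const_mul _).symm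
      _ = ∫ θ, (φ θ * Real.log (φ θ / qa θ) + Real.log c * φ θ) ∂μ := by
          rw [show (fun θ => ∑ k, w k * (φ θ * Real.log (φ θ / q k θ)))
            = fun θ => φ θ * Real.log (φ θ / qa θ) + Real.log c * φ θ from funext e1]
      _ = (∫ θ, φ θ * Real.log (φ θ / qa θ) ∂μ) + Real.log c := by
          rw [integral_add hφlogInt (hφInt.const_mul _), integral_const_mul, hφint,
            mul_one]
  -- Gibbs' inequality
  have hGibbs : 0 ≤ ∫ θ, φ θ * Real.log (φ θ / qa θ) ∂μ := by
    have hpt : ∀ θ, -(φ θ * Real.log (φ θ / qa θ)) ≤ qa θ - φ θ := by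
      intro θ
      rcases eq_or_lt_of_le (hφnn θ) with h0 | h0
      · rw [← h0]; simp [(hqapos θ).le]
      · have ht : 0 < qa θ / φ θ := div_pos (hqapos θ) h0
        have h2 := Real.log_le_sub_one_of_pos ht
        have hswap : Real.log (φ θ / qa θ) = - Real.log (qa θ / φ θ) := by
          rw [← Real.log_inv, inv_div]
        have hmul : φ θ * (qa θ / φ θ) = qa θ := mul_div_cancel₀ _ h0.ne'
        rw [hswap]
        nlinarith [mul_le_mul_of_nonneg_left h2 h0.le]
    have hmono := integral_mono (f := fun θ => -(φ θ * Real.log (φ θ / qa θ)))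
      (g := fun θ => qa θ - φ θ) hφlogInt.neg (hqaInt.sub hφInt) hpt
    rw [integral_neg, integral_sub hqaInt hφInt, hqaint1, hφint] at hmono
    linarith
  rw [hL, hR]
  linarith
end

section
/- The normalized weighted Hölder mean of order α minimizes the weighted sum of α-divergences: for α ∈ ℝ \ {0,1}, probability densities q_1,…,q_K on Θ, and weights w_1,…,w_K ≥ 0 summing to 1 such that c = (∫_Θ (Σ_k w_k q_k(θ)^α)^{1/α} dθ)^{-1} is well defined, the density q(θ) = c (Σ_k w_k q_k(θ)^α)^{1/α} satisfies Σ_k w_k D_α(q_k ‖ q) ≤ Σ_k w_k D_α(q_k ‖ φ) for every probability density φ. -/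
open MeasureTheory
open scoped ENNReal

/-- Hölder inequality in geometric-mean form for lintegrals. -/
lemma holder_lin {Θ : Type*} [MeasurableSpace Θ] {μ : Measure Θ}
    {u v : Θ → ℝ≥0∞} (hu : AEMeasurable u μ) (hv : AEMeasurable v μ)
    {t : ℝ} (ht0 : 0 < t) (ht1 : t < 1) :
    ∫⁻ θ, u θ ^ t * v θ ^ (1 - t) ∂μ ≤
      (∫⁻ θ, u θ ∂μ) ^ t * (∫⁻ θ, v θ ∂μ) ^ (1 - t) := by
  have hconj : ((1/t) : ℝ).HolderConjugate (1/(1-t)) :=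
    Real.holderConjugate_one_div ht0 (by linarith) (by ring)
  have holder := ENNReal.lintegral_mul_le_Lp_mul_Lq μ hconj
    (f := fun θ => u θ ^ t) (g := fun θ => v θ ^ (1 - t))
    (hu.pow_const t) (hv.pow_const (1 - t))
  have e1 : ∫⁻ a, ((fun θ => u θ ^ t) a) ^ (1/t) ∂μ = ∫⁻ θ, u θ ∂μ :=
    lintegral_congr fun θ => by
      rw [← ENNReal.rpow_mul, show t * (1/t) = 1 by field_simp, ENNReal.rpow_one]
  have e2 : ∫⁻ a, ((fun θ => v θ ^ (1-t)) a) ^ (1/(1-t)) ∂μ = ∫⁻ θ, v θ ∂μ :=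
    lintegral_congr fun θ => by
      rw [← ENNReal.rpow_mul, show (1-t) * (1/(1-t)) = 1 by
        have : (1:ℝ) - t ≠ 0 := by linarith
        field_simp, ENNReal.rpow_one]
  rw [e1, e2, one_div_one_div, one_div_one_div] at holder
  exact holder

lemma ofReal_combo {a b : ℝ} (ha : 0 < a) (hb : 0 < b) (s r : ℝ) :
    ENNReal.ofReal a ^ s * ENNReal.ofReal b ^ r = ENNReal.ofReal (a ^ s * b ^ r) := by
  rw [ENNReal.ofReal_rpow_of_pos ha, ENNReal.ofReal_rpow_of_pos hb,
    ← ENNReal.ofReal_mul (Real.rpow_nonneg ha.le s)]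

lemma holder_key {Θ : Type*} [MeasurableSpace Θ] {μ : Measure Θ}
    (α : ℝ) (hα0 : α ≠ 0) (hα1 : α ≠ 1)
    {φ g : Θ → ℝ} (hφm : Measurable φ) (hgm : Measurable g)
    (hφp : ∀ θ, 0 < φ θ) (hgp : ∀ θ, 0 < g θ)
    (hφint : Integrable φ μ) (hφ1 : ∫ θ, φ θ ∂μ = 1)
    (hgint : Integrable g μ) (hIpos : 0 < ∫ θ, g θ ∂μ)
    (hBint : Integrable (fun θ => φ θ ^ (1 - α) * g θ ^ α) μ) :
    (α * (α - 1))⁻¹ * ((∫ θ, g θ ∂μ) ^ α - 1) ≤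
      (α * (α - 1))⁻¹ * ((∫ θ, φ θ ^ (1 - α) * g θ ^ α ∂μ) - 1) := by
  set I : ℝ := ∫ θ, g θ ∂μ with hI
  set B : ℝ := ∫ θ, φ θ ^ (1 - α) * g θ ^ α ∂μ with hB
  have hBnn : 0 ≤ B := integral_nonneg fun θ =>
    mul_nonneg (Real.rpow_nonneg (hφp θ).le _) (Real.rpow_nonneg (hgp θ).le _)
  set F : Θ → ℝ≥0∞ := fun θ => ENNReal.ofReal (φ θ) with hF
  set G : Θ → ℝ≥0∞ := fun θ => ENNReal.ofReal (g θ) with hG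
  set H : Θ → ℝ≥0∞ := fun θ => ENNReal.ofReal (φ θ ^ (1 - α) * g θ ^ α) with hH
  have hFm : Measurable F := by fun_prop
  have hGm : Measurable G := by fun_prop
  have hHm : Measurable H := by fun_prop
  have lF : ∫⁻ θ, F θ ∂μ = 1 := by
    rw [hF, ← ofReal_integral_eq_lintegral_ofReal hφint
      (Filter.Eventually.of_forall fun θ => (hφp θ).le), hφ1, ENNReal.ofReal_one]
  have lG : ∫⁻ θ, G θ ∂μ = ENNReal.ofReal I := by
    rw [hG, ← ofReal_integral_eq_lintegral_ofReal hgint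
      (Filter.Eventually.of_forall fun θ => (hgp θ).le)]
  have lH : ∫⁻ θ, H θ ∂μ = ENNReal.ofReal B := by
    rw [hH, ← ofReal_integral_eq_lintegral_ofReal hBint
      (Filter.Eventually.of_forall fun θ =>
        mul_nonneg (Real.rpow_nonneg (hφp θ).le _) (Real.rpow_nonneg (hgp θ).le _))]
  rcases lt_trichotomy α 0 with hneg | h0 | hpos
  · -- α < 0 : coefficient positive, need I ^ α ≤ B
    have hcoef : (0:ℝ) < (α * (α - 1))⁻¹ := by apply inv_pos.mpr; nlinarith
    have key : I ^ α ≤ B := by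
      have hβ0 : (1:ℝ) - α ≠ 0 := by linarith
      have ht0 : 0 < 1/(1-α) := by apply div_pos one_pos; linarith
      have ht1 : 1/(1-α) < 1 := by
        rw [div_lt_one (by linarith)]; linarith
      have hlin := holder_lin (μ := μ) hHm.aemeasurable hGm.aemeasurable ht0 ht1
      have hpt : ∀ θ, H θ ^ (1/(1-α)) * G θ ^ (1 - 1/(1-α)) = F θ := by
        intro θ
        have hφθ := hφp θ; have hgθ := hgp θ
        have hm : (0:ℝ) < φ θ ^ (1-α) * g θ ^ α := by positivity
        rw [hH, hG, hF, ofReal_combo hm hgθ]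
        congr 1
        rw [Real.mul_rpow (by positivity) (by positivity),
          ← Real.rpow_mul hφθ.le, ← Real.rpow_mul hgθ.le,
          show (1-α) * (1/(1-α)) = 1 by field_simp, Real.rpow_one,
          mul_assoc, ← Real.rpow_add hgθ,
          show α * (1/(1-α)) + (1 - 1/(1-α)) = 0 by field_simp; ring,
          Real.rpow_zero, mul_one]
      rw [lintegral_congr hpt, lF, lH, lG] at hlin
      -- hlin : 1 ≤ ofReal B ^ (1/(1-α)) * ofReal I ^ (1 - 1/(1-α))
      have hIB : (1:ℝ≥0∞) ≤ ENNReal.ofReal B * ENNReal.ofReal I ^ (-α) := by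
        calc (1:ℝ≥0∞) = 1 ^ (1-α) := by rw [ENNReal.one_rpow]
        _ ≤ (ENNReal.ofReal B ^ (1/(1-α)) * ENNReal.ofReal I ^ (1 - 1/(1-α))) ^ (1-α) :=
            ENNReal.rpow_le_rpow hlin (by linarith)
        _ = ENNReal.ofReal B * ENNReal.ofReal I ^ (-α) := by
            rw [ENNReal.mul_rpow_of_nonneg _ _ (by linarith : (0:ℝ) ≤ 1-α),
              ← ENNReal.rpow_mul, ← ENNReal.rpow_mul,
              show (1/(1-α)) * (1-α) = 1 by field_simp,
              show (1 - 1/(1-α)) * (1-α) = -α by field_simp; ring,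
              ENNReal.rpow_one]
      have hIpos' : (0:ℝ≥0∞) < ENNReal.ofReal I ^ (-α) :=
        ENNReal.rpow_pos (ENNReal.ofReal_pos.mpr hIpos) ENNReal.ofReal_ne_top
      have hIntop : ENNReal.ofReal I ^ (-α) ≠ ⊤ :=
        ENNReal.rpow_ne_top_of_nonneg (by linarith) ENNReal.ofReal_ne_top
      have h2 : (ENNReal.ofReal I ^ (-α))⁻¹ ≤ ENNReal.ofReal B := by
        calc (ENNReal.ofReal I ^ (-α))⁻¹ = (ENNReal.ofReal I ^ (-α))⁻¹ * 1 :=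
              (mul_one _).symm
        _ ≤ (ENNReal.ofReal I ^ (-α))⁻¹ * (ENNReal.ofReal B * ENNReal.ofReal I ^ (-α)) :=
              mul_le_mul_right hIB _
        _ = ENNReal.ofReal B * ((ENNReal.ofReal I ^ (-α))⁻¹ * ENNReal.ofReal I ^ (-α)) := by
              ring
        _ = ENNReal.ofReal B := by
              rw [ENNReal.inv_mul_cancel hIpos'.ne' hIntop, mul_one]
      rw [← ENNReal.rpow_neg_one, ← ENNReal.rpow_mul,
        show (-α) * (-1) = α by ring, ENNReal.ofReal_rpow_of_pos hIpos] at h2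
      exact (ENNReal.ofReal_le_ofReal_iff hBnn).mp h2
    nlinarith
  · exact absurd h0 hα0
  rcases lt_trichotomy α 1 with hlt | h1 | hgt
  · -- 0 < α < 1 : coefficient negative, need B ≤ I ^ α
    have hcoef : (α * (α - 1))⁻¹ < 0 := by apply inv_lt_zero.mpr; nlinarith
    have key : B ≤ I ^ α := by
      have hlin := holder_lin (μ := μ) hFm.aemeasurable hGm.aemeasurable
        (show 0 < 1 - α by linarith) (show (1:ℝ) - α < 1 by linarith)
      have hpt : ∀ θ, F θ ^ (1-α) * G θ ^ (1-(1-α)) = H θ := by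
        intro θ
        rw [hH, hG, hF, ofReal_combo (hφp θ) (hgp θ), show 1-(1-α) = α by ring]
      rw [lintegral_congr hpt, lF, lH, lG, ENNReal.one_rpow, one_mul,
        show 1-(1-α) = α by ring, ENNReal.ofReal_rpow_of_pos hIpos] at hlin
      exact (ENNReal.ofReal_le_ofReal_iff (Real.rpow_nonneg hIpos.le α)).mp hlin
    nlinarith
  · exact absurd h1 hα1
  · -- 1 < α : coefficient positive, need I ^ α ≤ B
    have hcoef : (0:ℝ) < (α * (α - 1))⁻¹ := by apply inv_pos.mpr; nlinarith
    have key : I ^ α ≤ B := by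
      have hα0' : (0:ℝ) < α := by linarith
      have hlin := holder_lin (μ := μ) hHm.aemeasurable hFm.aemeasurable
        (show 0 < 1/α by positivity) (show 1/α < 1 by rw [div_lt_one hα0']; linarith)
      have hpt : ∀ θ, H θ ^ (1/α) * F θ ^ (1-1/α) = G θ := by
        intro θ
        have hφθ := hφp θ; have hgθ := hgp θ
        have hm : (0:ℝ) < φ θ ^ (1-α) * g θ ^ α := by positivity
        rw [hH, hG, hF, ofReal_combo hm hφθ]
        congr 1
        rw [Real.mul_rpow (by positivity) (by positivity),
          ← Real.rpow_mul hφθ.le, ← Real.rpow_mul hgθ.le,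
          show α * (1/α) = 1 by field_simp, Real.rpow_one, mul_comm _ (g θ),
          mul_assoc, ← Real.rpow_add hφθ,
          show (1-α) * (1/α) + (1 - 1/α) = 0 by field_simp; ring,
          Real.rpow_zero, mul_one]
      rw [lintegral_congr hpt, lF, lH, lG, ENNReal.one_rpow, mul_one] at hlin
      -- hlin : ofReal I ≤ ofReal B ^ (1/α)
      have h2 : ENNReal.ofReal I ^ α ≤ ENNReal.ofReal B := by
        calc ENNReal.ofReal I ^ α ≤ (ENNReal.ofReal B ^ (1/α)) ^ α :=
              ENNReal.rpow_le_rpow hlin hα0'.le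
        _ = ENNReal.ofReal B := by
            rw [← ENNReal.rpow_mul, show (1/α) * α = 1 by field_simp, ENNReal.rpow_one]
      rw [ENNReal.ofReal_rpow_of_pos hIpos] at h2
      exact (ENNReal.ofReal_le_ofReal_iff hBnn).mp h2
    nlinarith

lemma pt_rw (α : ℝ) {x p : ℝ} (hx : 0 < x) :
    x * ((p - x ^ α) / x ^ α) = x ^ (1 - α) * p - x := by
  have hxα : (0:ℝ) < x ^ α := Real.rpow_pos_of_pos hx α
  have h2 : x ^ (1 - α) = x * (x ^ α)⁻¹ := by
    rw [show (1 - α) = 1 + (-α) by ring, Real.rpow_add hx, Real.rpow_one,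
      Real.rpow_neg hx.le]
  rw [h2, sub_div, div_self hxα.ne', div_eq_mul_inv]
  ring

lemma sum_div {Θ : Type*} [MeasurableSpace Θ] {μ : Measure Θ} (α : ℝ) {K : ℕ}
    (q : Fin K → Θ → ℝ) (w : Fin K → ℝ) (hqpos : ∀ k θ, 0 < q k θ)
    (hwsum : ∑ k, w k = 1)
    {ψ : Θ → ℝ} (hψp : ∀ θ, 0 < ψ θ)
    (hψint : Integrable ψ μ) (hψ1 : ∫ θ, ψ θ ∂μ = 1)
    (hint : ∀ k, w k ≠ 0 → Integrable (fun θ => ψ θ ^ (1 - α) * q k θ ^ α) μ) :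
    ∑ k, w k * ((α * (α - 1))⁻¹ * ∫ θ, ψ θ * ((q k θ ^ α - ψ θ ^ α) / ψ θ ^ α) ∂μ)
      = (α * (α - 1))⁻¹ *
        ((∫ θ, ψ θ ^ (1 - α) * (∑ k, w k * q k θ ^ α) ∂μ) - 1) := by
  set C : ℝ := (α * (α - 1))⁻¹ with hC
  set A : Fin K → ℝ := fun k => ∫ θ, ψ θ ^ (1 - α) * q k θ ^ α ∂μ with hA
  have hterm : ∀ k, w k * (C * ∫ θ, ψ θ * ((q k θ ^ α - ψ θ ^ α) / ψ θ ^ α) ∂μ)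
      = w k * (C * (A k - 1)) := by
    intro k
    by_cases hw : w k = 0
    · simp [hw]
    · have e : (∫ θ, ψ θ * ((q k θ ^ α - ψ θ ^ α) / ψ θ ^ α) ∂μ)
          = ∫ θ, (ψ θ ^ (1 - α) * q k θ ^ α - ψ θ) ∂μ :=
        integral_congr_ae (Filter.Eventually.of_forall fun θ => pt_rw α (hψp θ))
      rw [e, integral_sub (hint k hw) hψint, hψ1]
  have hsum : ∫ θ, ψ θ ^ (1 - α) * (∑ k, w k * q k θ ^ α) ∂μ = ∑ k, w k * A k := by
    have e : (fun θ => ψ θ ^ (1 - α) * (∑ k, w k * q k θ ^ α))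
        = fun θ => ∑ k, w k * (ψ θ ^ (1 - α) * q k θ ^ α) := by
      funext θ
      rw [Finset.mul_sum]
      exact Finset.sum_congr rfl fun k _ => by ring
    rw [e, integral_finset_sum]
    · exact Finset.sum_congr rfl fun k _ => by
        rw [integral_const_mul]
    · intro k _
      by_cases hw : w k = 0
      · simpa [hw] using integrable_zero Θ ℝ μ
      · exact (hint k hw).const_mul _
  rw [hsum]
  calc ∑ k, w k * (C * ∫ θ, ψ θ * ((q k θ ^ α - ψ θ ^ α) / ψ θ ^ α) ∂μ)
      = ∑ k, (C * (w k * A k) - C * w k) := by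
        rw [Finset.sum_congr rfl fun k _ => hterm k]
        exact Finset.sum_congr rfl fun k _ => by ring
  _ = C * (∑ k, w k * A k) - C * (∑ k, w k) := by
        rw [Finset.sum_sub_distrib, ← Finset.mul_sum, ← Finset.mul_sum]
  _ = C * ((∑ k, w k * A k) - 1) := by rw [hwsum]; ring

lemma aux_h3 {s α : ℝ} (hs : 0 < s) (hα0 : α ≠ 0) :
    (s ^ (1/α)) ^ (1 - α) * s = s ^ (1/α) := by
  rw [← Real.rpow_mul hs.le]
  calc s ^ (1/α * (1-α)) * s = s ^ (1/α * (1-α)) * s ^ (1:ℝ) := by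
        rw [Real.rpow_one]
  _ = s ^ (1/α * (1-α) + 1) := (Real.rpow_add hs _ _).symm
  _ = s ^ (1/α) := by rw [show 1/α * (1-α) + 1 = 1/α by field_simp; ring]

lemma aux_c {I α : ℝ} (hI : 0 < I) : I⁻¹ ^ (1 - α) * I = I ^ α := by
  rw [Real.inv_rpow hI.le, ← Real.rpow_neg hI.le]
  calc I ^ (-(1-α)) * I = I ^ (-(1-α)) * I ^ (1:ℝ) := by rw [Real.rpow_one]
  _ = I ^ (-(1-α) + 1) := (Real.rpow_add hI _ _).symm
  _ = I ^ α := by norm_num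

/-- The normalized weighted Hölder mean of order α minimizes the weighted
sum of α-divergences, where
`D_α(p ‖ φ) = (1/(α(α−1))) ∫ φ(θ) (p(θ)^α − φ(θ)^α)/φ(θ)^α dθ`. -/
theorem holder_pool_minimizes_alpha_divergence
    {Θ : Type*} [MeasurableSpace Θ] (μ : Measure Θ) [SigmaFinite μ]
    (α : ℝ) (hα0 : α ≠ 0) (hα1 : α ≠ 1)
    {K : ℕ} (q : Fin K → Θ → ℝ) (w : Fin K → ℝ)
    (hqmeas : ∀ k, Measurable (q k)) (hqpos : ∀ k θ, 0 < q k θ)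
    (hqint : ∀ k, ∫ θ, q k θ ∂μ = 1)
    (hwnn : ∀ k, 0 ≤ w k) (hwsum : ∑ k, w k = 1)
    (hcint : Integrable (fun θ => (∑ k, w k * q k θ ^ α) ^ (1 / α)) μ)
    (hcpos : 0 < ∫ θ, (∑ k, w k * q k θ ^ α) ^ (1 / α) ∂μ)
    (φ : Θ → ℝ) (hφmeas : Measurable φ) (hφpos : ∀ θ, 0 < φ θ)
    (hφint : ∫ θ, φ θ ∂μ = 1)
    (hdivint : ∀ k, Integrable (fun θ => φ θ * ((q k θ ^ α - φ θ ^ α) / φ θ ^ α)) μ) :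
    (let c : ℝ := (∫ θ, (∑ k, w k * q k θ ^ α) ^ (1 / α) ∂μ)⁻¹
     let qa : Θ → ℝ := fun θ => c * (∑ k, w k * q k θ ^ α) ^ (1 / α)
     ∑ k, w k * ((α * (α - 1))⁻¹ *
         ∫ θ, qa θ * ((q k θ ^ α - qa θ ^ α) / qa θ ^ α) ∂μ) ≤
       ∑ k, w k * ((α * (α - 1))⁻¹ *
         ∫ θ, φ θ * ((q k θ ^ α - φ θ ^ α) / φ θ ^ α) ∂μ)) := by
  intro c qa
  -- basic objects
  set S : Θ → ℝ := fun θ => ∑ k, w k * q k θ ^ α with hS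
  set g : Θ → ℝ := fun θ => S θ ^ (1 / α) with hg
  set I : ℝ := ∫ θ, g θ ∂μ with hI
  have hIpos : 0 < I := hcpos
  have hgint : Integrable g μ := hcint
  have hSm : Measurable S := Finset.measurable_sum Finset.univ fun k _ => by
    have := hqmeas k; fun_prop
  have hgm : Measurable g := by fun_prop
  -- positivity of S
  have hex : ∃ k0, 0 < w k0 := by
    by_contra h
    push_neg at h
    have : ∀ k, w k = 0 := fun k => le_antisymm (h k) (hwnn k)
    rw [Finset.sum_congr rfl fun k _ => this k] at hwsum
    simp at hwsum
  obtain ⟨k0, hk0⟩ := hex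
  have hSpos : ∀ θ, 0 < S θ := by
    intro θ
    have h1 : 0 < w k0 * q k0 θ ^ α :=
      mul_pos hk0 (Real.rpow_pos_of_pos (hqpos k0 θ) α)
    refine lt_of_lt_of_le h1 ?_
    exact Finset.single_le_sum (f := fun k => w k * q k θ ^ α)
      (fun k _ => mul_nonneg (hwnn k) (Real.rpow_pos_of_pos (hqpos k θ) α).le)
      (Finset.mem_univ k0)
  have hgp : ∀ θ, 0 < g θ := fun θ => Real.rpow_pos_of_pos (hSpos θ) _
  have hcp : 0 < c := inv_pos.mpr hIpos
  have hqap : ∀ θ, 0 < qa θ := fun θ => mul_pos hcp (hgp θ)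
  have hqaint : Integrable qa μ := hgint.const_mul c
  have hqa1 : ∫ θ, qa θ ∂μ = 1 := by
    show ∫ θ, c * g θ ∂μ = 1
    rw [integral_const_mul, ← hI, inv_mul_cancel₀ hIpos.ne']
  have hφInt : Integrable φ μ := by
    by_contra h
    rw [integral_undef h] at hφint
    norm_num at hφint
  -- pointwise : g θ ^ α = S θ
  have hgα : ∀ θ, g θ ^ α = S θ := fun θ => by
    rw [hg, ← Real.rpow_mul (hSpos θ).le, one_div, inv_mul_cancel₀ hα0, Real.rpow_one]
  -- integrability for the φ side
  have hφk : ∀ k, w k ≠ 0 → Integrable (fun θ => φ θ ^ (1 - α) * q k θ ^ α) μ := by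
    intro k _
    have e : (fun θ => φ θ ^ (1 - α) * q k θ ^ α)
        = fun θ => φ θ * ((q k θ ^ α - φ θ ^ α) / φ θ ^ α) + φ θ := by
      funext θ
      rw [pt_rw α (hφpos θ)]
      ring
    rw [e]
    exact (hdivint k).add hφInt
  -- integrability for the qa side
  have hqak : ∀ k, w k ≠ 0 → Integrable (fun θ => qa θ ^ (1 - α) * q k θ ^ α) μ := by
    intro k hw
    have hwk : 0 < w k := lt_of_le_of_ne (hwnn k) (Ne.symm hw)
    refine Integrable.mono' (hgint.const_mul (c ^ (1 - α) / w k)) ?_ ?_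
    · have := hqmeas k
      apply Measurable.aestronglyMeasurable
      fun_prop
    · refine Filter.Eventually.of_forall fun θ => ?_
      have hb : qa θ ^ (1 - α) * q k θ ^ α ≤ c ^ (1 - α) / w k * g θ := by
        have h1 : qa θ ^ (1 - α) = c ^ (1 - α) * g θ ^ (1 - α) :=
          Real.mul_rpow hcp.le (hgp θ).le
        have h2 : q k θ ^ α ≤ S θ / w k := by
          rw [le_div_iff₀ hwk, mul_comm]
          exact Finset.single_le_sum (f := fun j => w j * q j θ ^ α)
            (fun j _ => mul_nonneg (hwnn j) (Real.rpow_pos_of_pos (hqpos j θ) α).le)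
            (Finset.mem_univ k)
        have h3 : g θ ^ (1 - α) * S θ = g θ :=
          aux_h3 (hSpos θ) hα0
        calc qa θ ^ (1 - α) * q k θ ^ α
            ≤ qa θ ^ (1 - α) * (S θ / w k) :=
              mul_le_mul_of_nonneg_left h2 (Real.rpow_nonneg (hqap θ).le _)
        _ = c ^ (1 - α) / w k * (g θ ^ (1 - α) * S θ) := by rw [h1]; ring
        _ = c ^ (1 - α) / w k * g θ := by rw [h3]
      rw [Real.norm_eq_abs, abs_of_nonneg
        (mul_nonneg (Real.rpow_nonneg (hqap θ).le _) (Real.rpow_nonneg (hqpos k θ).le _))]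
      exact hb
  -- apply sum_div to both sides
  rw [sum_div α q w hqpos hwsum hqap hqaint hqa1 hqak,
    sum_div α q w hqpos hwsum hφpos hφInt hφint hφk]
  -- compute the qa-side integral
  have hAqa : ∫ θ, qa θ ^ (1 - α) * S θ ∂μ = I ^ α := by
    have e : (fun θ => qa θ ^ (1 - α) * S θ) = fun θ => c ^ (1 - α) * g θ := by
      funext θ
      have h1 : qa θ ^ (1 - α) = c ^ (1 - α) * g θ ^ (1 - α) :=
        Real.mul_rpow hcp.le (hgp θ).le
      have h3 : g θ ^ (1 - α) * S θ = g θ :=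
        aux_h3 (hSpos θ) hα0
      calc qa θ ^ (1 - α) * S θ = c ^ (1 - α) * (g θ ^ (1 - α) * S θ) := by
            rw [h1]; ring
      _ = c ^ (1 - α) * g θ := by rw [h3]
    rw [e, integral_const_mul, ← hI]
    exact aux_c hIpos
  -- rewrite the φ-side integrand to use g
  have hBe : ∫ θ, φ θ ^ (1 - α) * S θ ∂μ = ∫ θ, φ θ ^ (1 - α) * g θ ^ α ∂μ :=
    integral_congr_ae (Filter.Eventually.of_forall fun θ => by simp only [hgα])
  -- integrability of the φ-side integrand
  have hBint : Integrable (fun θ => φ θ ^ (1 - α) * g θ ^ α) μ := by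
    have e : (fun θ => φ θ ^ (1 - α) * g θ ^ α)
        = fun θ => ∑ k, w k * (φ θ ^ (1 - α) * q k θ ^ α) := by
      funext θ
      rw [hgα θ, hS, Finset.mul_sum]
      exact Finset.sum_congr rfl fun k _ => by ring
    rw [e]
    apply integrable_finset_sum
    intro k _
    by_cases hw : w k = 0
    · simpa [hw] using integrable_zero Θ ℝ μ
    · exact (hφk k hw).const_mul _
  rw [hAqa, hBe]
  exact holder_key α hα0 hα1 hφmeas hgm hφpos hgp hφInt hφint hgint hIpos hBint
end

section
/- Characterization of multiplicative pooling: a pooling function g on positive opinion profiles satisfies individualized Bayesianity and g[q_0,…,q_0] = q_0 for a positive density q_0 if and only if g is the multiplicative pooling function g[q_1,…,q_K](θ) = c q_0(θ)^{1−K} ∏_{k=1}^K q_k(θ) with c the normalizing constant. -/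
open MeasureTheory

variable {Θ : Type*} [MeasurableSpace Θ]

/-- Bayesian update of a density `p` by a likelihood `ℓ`. -/
noncomputable def bayesUpdate (μ : Measure Θ) (ℓ p : Θ → ℝ) : Θ → ℝ :=
  fun θ => ℓ θ * p θ / ∫ x, ℓ x * p x ∂μ

/-- `ℓ` is a bounded, positive (measurable) likelihood function. -/
def IsBddPos (ℓ : Θ → ℝ) : Prop :=
  Measurable ℓ ∧ (∀ θ, 0 < ℓ θ) ∧ ∃ M : ℝ, ∀ θ, ℓ θ ≤ M

/-- A positive opinion profile whose components have a bounded ratio to the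
calibrating density `q0`. -/
def IsAdmissible (μ : Measure Θ) (q0 : Θ → ℝ) {K : ℕ} (q : Fin K → Θ → ℝ) : Prop :=
  ∀ k, Measurable (q k) ∧ (∀ θ, 0 < q k θ) ∧ (∫ θ, q k θ ∂μ = 1) ∧
    ∃ M : ℝ, ∀ θ, q k θ / q0 θ ≤ M

/-- Individualized Bayesianity: updating a single agent's density commutes with fusion. -/
def IndividualizedBayesianity (μ : Measure Θ) (q0 : Θ → ℝ) {K : ℕ}
    (g : (Fin K → Θ → ℝ) → Θ → ℝ) : Prop :=
  ∀ q : Fin K → Θ → ℝ, IsAdmissible μ q0 q → ∀ k : Fin K, ∀ ℓ : Θ → ℝ, IsBddPos ℓ →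
    g (Function.update q k (bayesUpdate μ ℓ (q k))) =ᵐ[μ] bayesUpdate μ ℓ (g q)


variable {μ : Measure Θ}

/-- partial profile -/
def Pj (q0 : Θ → ℝ) {K : ℕ} (q : Fin K → Θ → ℝ) (j : ℕ) : Fin K → Θ → ℝ :=
  fun k => if (k : ℕ) < j then q k else q0

/-- partial product density (unnormalized) -/
noncomputable def Fj (q0 : Θ → ℝ) {K : ℕ} (q : Fin K → Θ → ℝ) (j : ℕ) : Θ → ℝ :=
  fun θ => q0 θ * ∏ k : Fin K, (if (k : ℕ) < j then q k θ / q0 θ else 1)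

lemma Pj_zero (q0 : Θ → ℝ) {K : ℕ} (q : Fin K → Θ → ℝ) : Pj q0 q 0 = fun _ => q0 :=
  funext fun k => by simp [Pj]

lemma Fj_zero (q0 : Θ → ℝ) {K : ℕ} (q : Fin K → Θ → ℝ) : Fj q0 q 0 = q0 :=
  funext fun θ => by simp [Fj]

lemma Pj_top (q0 : Θ → ℝ) {K : ℕ} (q : Fin K → Θ → ℝ) : Pj q0 q K = q :=
  funext fun k => by simp [Pj, k.isLt]

lemma Fj_top (q0 : Θ → ℝ) {K : ℕ} (q : Fin K → Θ → ℝ) :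
    Fj q0 q K = fun θ => q0 θ * ∏ k : Fin K, (q k θ / q0 θ) :=
  funext fun θ => by
    simp only [Fj]
    congr 1
    exact Finset.prod_congr rfl fun k _ => by simp [k.isLt]

lemma Pj_succ (q0 : Θ → ℝ) {K : ℕ} (q : Fin K → Θ → ℝ) {j : ℕ} (hj : j < K) :
    Function.update (Pj q0 q j) ⟨j, hj⟩ (q ⟨j, hj⟩) = Pj q0 q (j + 1) := by
  funext i
  rcases eq_or_ne i ⟨j, hj⟩ with h | h
  · subst h
    simp [Pj, Function.update_self]
  · rw [Function.update_of_ne h]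
    have hne : (i : ℕ) ≠ j := fun hc => h (Fin.ext hc)
    simp only [Pj]
    by_cases hij : (i : ℕ) < j
    · rw [if_pos hij, if_pos (by omega)]
    · rw [if_neg hij, if_neg (by omega)]

lemma Fj_succ (q0 : Θ → ℝ) {K : ℕ} (q : Fin K → Θ → ℝ) {j : ℕ} (hj : j < K) (θ : Θ) :
    Fj q0 q (j + 1) θ = (q ⟨j, hj⟩ θ / q0 θ) * Fj q0 q j θ := by
  simp only [Fj]
  rw [← Finset.mul_prod_erase (Finset.univ : Finset (Fin K))
      (fun i : Fin K => if (i : ℕ) < j + 1 then q i θ / q0 θ else 1) (Finset.mem_univ ⟨j, hj⟩),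
    ← Finset.mul_prod_erase (Finset.univ : Finset (Fin K))
      (fun i : Fin K => if (i : ℕ) < j then q i θ / q0 θ else 1) (Finset.mem_univ ⟨j, hj⟩)]
  have herase : ∏ i ∈ (Finset.univ : Finset (Fin K)).erase ⟨j, hj⟩,
      (if (i : ℕ) < j + 1 then q i θ / q0 θ else 1) =
      ∏ i ∈ (Finset.univ : Finset (Fin K)).erase ⟨j, hj⟩,
      (if (i : ℕ) < j then q i θ / q0 θ else 1) := by
    refine Finset.prod_congr rfl fun i hi => ?_
    have h : i ≠ ⟨j, hj⟩ := (Finset.mem_erase.mp hi).1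
    have hne : (i : ℕ) ≠ j := fun hc => h (Fin.ext hc)
    by_cases hij : (i : ℕ) < j
    · rw [if_pos hij, if_pos (by omega)]
    · rw [if_neg hij, if_neg (by omega)]
  rw [herase]
  have h1 : ((⟨j, hj⟩ : Fin K) : ℕ) < j + 1 := by simp
  have h2 : ¬ ((⟨j, hj⟩ : Fin K) : ℕ) < j := by simp
  rw [if_pos h1, if_neg h2]
  ring

lemma my_integrable_of_integral_eq_one {f : Θ → ℝ} (h : ∫ θ, f θ ∂μ = 1) : Integrable f μ := by
  by_contra hc
  rw [integral_undef hc] at h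
  norm_num at h

lemma integral_pos_of_pos {f : Θ → ℝ} (hμ : μ ≠ 0) (hf : Integrable f μ)
    (hpos : ∀ θ, 0 < f θ) : 0 < ∫ θ, f θ ∂μ := by
  rw [integral_pos_iff_support_of_nonneg (fun θ => (hpos θ).le) hf]
  have : Function.support f = Set.univ := by
    ext θ; simp [(hpos θ).ne']
  rw [this]
  exact Measure.measure_univ_pos.mpr hμ

lemma integrable_mul_prod {K : ℕ} {q0 : Θ → ℝ} (hq0meas : Measurable q0)
    (hq0pos : ∀ θ, 0 < q0 θ) (hq0i : Integrable q0 μ)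
    (r : Fin K → Θ → ℝ) (hr : ∀ k, Measurable (r k)) (hpos : ∀ k θ, 0 ≤ r k θ)
    (hbd : ∀ k, ∃ M : ℝ, ∀ θ, r k θ ≤ M) :
    Integrable (fun θ => q0 θ * ∏ k, r k θ) μ := by
  choose M hM using hbd
  have hmeas : Measurable (fun θ => q0 θ * ∏ k, r k θ) :=
    hq0meas.mul (Finset.measurable_prod _ (fun k _ => hr k))
  refine Integrable.mono' (hq0i.const_mul (∏ k, max (M k) 0)) hmeas.aestronglyMeasurable ?_
  filter_upwards with θ
  have h1 : 0 ≤ ∏ k, r k θ := Finset.prod_nonneg (fun k _ => hpos k θ)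
  have h2 : ∏ k, r k θ ≤ ∏ k, max (M k) 0 :=
    Finset.prod_le_prod (fun k _ => hpos k θ) (fun k _ => le_max_of_le_left (hM k θ))
  rw [Real.norm_eq_abs, abs_of_nonneg (mul_nonneg (hq0pos θ).le h1)]
  calc q0 θ * ∏ k, r k θ ≤ q0 θ * ∏ k, max (M k) 0 :=
        mul_le_mul_of_nonneg_left h2 (hq0pos θ).le
    _ = (∏ k, max (M k) 0) * q0 θ := mul_comm _ _

lemma rpow_prod_eq {K : ℕ} {a : ℝ} (ha : 0 < a) (q : Fin K → ℝ) :
    a ^ ((1 : ℝ) - K) * ∏ k, q k = a * ∏ k, (q k / a) := by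
  rw [Finset.prod_div_distrib, Finset.prod_const, Finset.card_univ, Fintype.card_fin,
    Real.rpow_sub ha, Real.rpow_one, Real.rpow_natCast]
  field_simp

section Main

variable {q0 : Θ → ℝ} {K : ℕ} {q : Fin K → Θ → ℝ}

lemma Pj_admissible (hq0meas : Measurable q0) (hq0pos : ∀ θ, 0 < q0 θ)
    (hq0int : ∫ θ, q0 θ ∂μ = 1) (hq : IsAdmissible μ q0 q) (j : ℕ) :
    IsAdmissible μ q0 (Pj q0 q j) := by
  intro k
  by_cases h : (k : ℕ) < j
  · simpa [Pj, h] using hq k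
  · simp only [Pj, if_neg h]
    exact ⟨hq0meas, hq0pos, hq0int, 1, fun θ => le_of_eq (div_self (hq0pos θ).ne')⟩

lemma Fj_pos (hq0pos : ∀ θ, 0 < q0 θ) (hq : IsAdmissible μ q0 q) (j : ℕ) (θ : Θ) :
    0 < Fj q0 q j θ := by
  refine mul_pos (hq0pos θ) (Finset.prod_pos fun k _ => ?_)
  by_cases h : (k : ℕ) < j
  · rw [if_pos h]; exact div_pos ((hq k).2.1 θ) (hq0pos θ)
  · rw [if_neg h]; norm_num

lemma Fj_integrable (hq0meas : Measurable q0) (hq0pos : ∀ θ, 0 < q0 θ)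
    (hq0i : Integrable q0 μ) (hq : IsAdmissible μ q0 q) (j : ℕ) :
    Integrable (Fj q0 q j) μ := by
  refine integrable_mul_prod hq0meas hq0pos hq0i _ (fun k => ?_) (fun k θ => ?_) (fun k => ?_)
  · by_cases h : (k : ℕ) < j <;> simp only [if_pos, if_neg, h, if_true, if_false]
    · exact (hq k).1.div hq0meas
    · exact measurable_const
  · by_cases h : (k : ℕ) < j <;> simp only [h, if_true, if_false]
    · exact (div_pos ((hq k).2.1 θ) (hq0pos θ)).le
    · norm_num
  · obtain ⟨M, hM⟩ := (hq k).2.2.2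
    refine ⟨max M 1, fun θ => ?_⟩
    by_cases h : (k : ℕ) < j <;> simp only [h, if_true, if_false]
    · exact le_max_of_le_left (hM θ)
    · exact le_max_right _ _

lemma bayes_ratio (hq0pos : ∀ θ, 0 < q0 θ) (hq : IsAdmissible μ q0 q) (k : Fin K) :
    bayesUpdate μ (fun θ => q k θ / q0 θ) q0 = q k := by
  have hpt : ∀ θ, q k θ / q0 θ * q0 θ = q k θ := fun θ => div_mul_cancel₀ _ (hq0pos θ).ne'
  funext θ
  simp only [bayesUpdate]
  simp_rw [hpt]
  rw [(hq k).2.2.1, div_one]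

lemma forward_key [SigmaFinite μ] (hμ : μ ≠ 0) (hq0meas : Measurable q0)
    (hq0pos : ∀ θ, 0 < q0 θ) (hq0int : ∫ θ, q0 θ ∂μ = 1)
    {g : (Fin K → Θ → ℝ) → Θ → ℝ}
    (hIB : ∀ p : Fin K → Θ → ℝ, IsAdmissible μ q0 p → ∀ k : Fin K, ∀ ℓ : Θ → ℝ, IsBddPos ℓ →
      g (Function.update p k (bayesUpdate μ ℓ (p k))) =ᵐ[μ] bayesUpdate μ ℓ (g p))
    (hbase : g (fun _ => q0) =ᵐ[μ] q0)
    (hq : IsAdmissible μ q0 q) :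
    ∀ j, j ≤ K → g (Pj q0 q j) =ᵐ[μ] fun θ => (∫ x, Fj q0 q j x ∂μ)⁻¹ * Fj q0 q j θ := by
  have hq0i : Integrable q0 μ := my_integrable_of_integral_eq_one hq0int
  intro j
  induction j with
  | zero =>
    intro _
    rw [Pj_zero, Fj_zero, hq0int]
    simpa using hbase
  | succ j ih =>
    intro hj1
    have hj : j < K := hj1
    have ihh := ih (le_of_lt hj)
    set k : Fin K := ⟨j, hj⟩ with hk
    -- the likelihood
    set L : Θ → ℝ := fun θ => q k θ / q0 θ with hL
    have hLbdd : IsBddPos L := by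
      obtain ⟨M, hM⟩ := (hq k).2.2.2
      exact ⟨(hq k).1.div hq0meas, fun θ => div_pos ((hq k).2.1 θ) (hq0pos θ), M, hM⟩
    have hPk : Pj q0 q j k = q0 := by simp [Pj, hk]
    have hupd : Function.update (Pj q0 q j) k (bayesUpdate μ L (Pj q0 q j k)) = Pj q0 q (j + 1) := by
      rw [hPk, hL, bayes_ratio hq0pos hq]
      exact Pj_succ q0 q hj
    have hib := hIB (Pj q0 q j) (Pj_admissible hq0meas hq0pos hq0int hq j) k L hLbdd
    rw [hupd] at hib
    -- constants
    set c : ℝ := (∫ x, Fj q0 q j x ∂μ)⁻¹ with hc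
    have hcpos : 0 < c := inv_pos.mpr (integral_pos_of_pos hμ
      (Fj_integrable hq0meas hq0pos hq0i hq j) (Fj_pos hq0pos hq j))
    set I : ℝ := ∫ x, Fj q0 q (j + 1) x ∂μ with hI
    have hIpos : 0 < I := integral_pos_of_pos hμ
      (Fj_integrable hq0meas hq0pos hq0i hq (j + 1)) (Fj_pos hq0pos hq (j + 1))
    have hD : ∫ x, L x * g (Pj q0 q j) x ∂μ = c * I := by
      have h1 : (fun x => L x * g (Pj q0 q j) x) =ᵐ[μ] fun x => c * (L x * Fj q0 q j x) := by
        filter_upwards [ihh] with x hx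
        rw [hx]; ring
      rw [integral_congr_ae h1, integral_const_mul]
      congr 1
      exact integral_congr_ae (Filter.Eventually.of_forall fun x => (Fj_succ q0 q hj x).symm)
    refine hib.trans ?_
    filter_upwards [ihh] with θ hθ
    simp only [bayesUpdate]
    rw [hθ, hD, Fj_succ q0 q hj θ]
    have : L θ * (c * Fj q0 q j θ) / (c * I) = I⁻¹ * (L θ * Fj q0 q j θ) := by
      field_simp
    rw [this]

end Main

lemma prod_update_apply {K : ℕ} (q : Fin K → Θ → ℝ) (k : Fin K) (v : Θ → ℝ) (θ : Θ) :
    ∏ j, Function.update q k v j θ = v θ * ∏ j ∈ Finset.univ.erase k, q j θ := by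
  have h : ∀ j, Function.update q k v j θ = Function.update (fun j => q j θ) k (v θ) j := by
    intro j
    by_cases hj : j = k <;> simp [hj, Function.update_apply]
  simp_rw [h]
  rw [Finset.prod_update_of_mem (Finset.mem_univ k), Finset.sdiff_singleton_eq_erase]

section Main2

variable {q0 : Θ → ℝ} {K : ℕ}

lemma Fm_facts [SigmaFinite μ] (hμ : μ ≠ 0) (hq0meas : Measurable q0)
    (hq0pos : ∀ θ, 0 < q0 θ) (hq0i : Integrable q0 μ)
    {q : Fin K → Θ → ℝ} (hq : IsAdmissible μ q0 q) :
    Integrable (fun θ => q0 θ ^ ((1 : ℝ) - K) * ∏ k, q k θ) μ ∧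
      (∀ θ, 0 < q0 θ ^ ((1 : ℝ) - K) * ∏ k, q k θ) ∧
      0 < ∫ θ, q0 θ ^ ((1 : ℝ) - K) * ∏ k, q k θ ∂μ := by
  have heq : (fun θ => q0 θ ^ ((1 : ℝ) - K) * ∏ k, q k θ) =
      fun θ => q0 θ * ∏ k, (q k θ / q0 θ) :=
    funext fun θ => rpow_prod_eq (hq0pos θ) _
  have hint : Integrable (fun θ => q0 θ ^ ((1 : ℝ) - K) * ∏ k, q k θ) μ := by
    rw [heq]
    exact integrable_mul_prod hq0meas hq0pos hq0i _
      (fun k => (hq k).1.div hq0meas)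
      (fun k θ => (div_pos ((hq k).2.1 θ) (hq0pos θ)).le)
      (fun k => (hq k).2.2.2)
  have hpos : ∀ θ, 0 < q0 θ ^ ((1 : ℝ) - K) * ∏ k, q k θ := fun θ =>
    mul_pos (Real.rpow_pos_of_pos (hq0pos θ) _) (Finset.prod_pos fun k _ => (hq k).2.1 θ)
  exact ⟨hint, hpos, integral_pos_of_pos hμ hint hpos⟩

end Main2

/-- A pooling function on positive opinion profiles satisfies
individualized Bayesianity together with `g[q0,…,q0] = q0` if and only if it is the
multiplicative pooling function with calibrating pdf `q0`. -/
theorem multiplicative_pooling_characterization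
    (μ : Measure Θ) [SigmaFinite μ] {K : ℕ}
    (q0 : Θ → ℝ) (hq0meas : Measurable q0) (hq0pos : ∀ θ, 0 < q0 θ)
    (hq0int : ∫ θ, q0 θ ∂μ = 1)
    (g : (Fin K → Θ → ℝ) → Θ → ℝ)
    (hg : ∀ q, IsAdmissible μ q0 q →
      Measurable (g q) ∧ (∀ θ, 0 ≤ g q θ) ∧ ∫ θ, g q θ ∂μ = 1) :
    (IndividualizedBayesianity μ q0 g ∧ g (fun _ => q0) =ᵐ[μ] q0) ↔
      ∀ q : Fin K → Θ → ℝ, IsAdmissible μ q0 q →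
        g q =ᵐ[μ] fun θ =>
          (∫ x, q0 x ^ ((1 : ℝ) - K) * ∏ k, q k x ∂μ)⁻¹ *
            (q0 θ ^ ((1 : ℝ) - K) * ∏ k, q k θ) := by
  have hμ : μ ≠ 0 := by
    intro h
    rw [h] at hq0int
    simp at hq0int
  have hq0i : Integrable q0 μ := my_integrable_of_integral_eq_one hq0int
  constructor
  · rintro ⟨hIB, hbase⟩ q hq
    have hkey := forward_key hμ hq0meas hq0pos hq0int hIB hbase hq K le_rfl
    rw [Pj_top] at hkey
    have hFK : Fj q0 q K = fun θ => q0 θ ^ ((1 : ℝ) - K) * ∏ k, q k θ := by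
      rw [Fj_top]
      exact funext fun θ => (rpow_prod_eq (hq0pos θ) _).symm
    simp only [hFK] at hkey
    exact hkey
  · intro hmul
    constructor
    · intro q hq k ℓ hℓ
      obtain ⟨hℓmeas, hℓpos, M, hℓM⟩ := hℓ
      obtain ⟨hqkmeas, hqkpos, hqkint, Mk, hMk⟩ := hq k
      have hqki : Integrable (q k) μ := my_integrable_of_integral_eq_one hqkint
      have hℓnorm : ∃ C, ∀ x, ‖ℓ x‖ ≤ C :=
        ⟨M, fun x => by rw [Real.norm_eq_abs, abs_of_pos (hℓpos x)]; exact hℓM x⟩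
      have hℓqint : Integrable (fun x => ℓ x * q k x) μ :=
        hqki.bdd_mul hℓmeas.aestronglyMeasurable (Filter.Eventually.of_forall hℓnorm.choose_spec)
      set Z : ℝ := ∫ x, ℓ x * q k x ∂μ with hZ
      have hZpos : 0 < Z :=
        integral_pos_of_pos hμ hℓqint (fun x => mul_pos (hℓpos x) (hqkpos x))
      set q' : Fin K → Θ → ℝ := Function.update q k (bayesUpdate μ ℓ (q k)) with hq'
      have hadm' : IsAdmissible μ q0 q' := by
        intro j
        rcases eq_or_ne j k with rfl | hne
        · rw [hq', Function.update_self]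
          refine ⟨(hℓmeas.mul hqkmeas).div_const _,
            fun θ => div_pos (mul_pos (hℓpos θ) (hqkpos θ)) hZpos, ?_, ?_⟩
          · show ∫ θ, ℓ θ * q j θ / Z ∂μ = 1
            rw [integral_div]
            exact div_self hZpos.ne'
          · refine ⟨M * Mk / Z, fun θ => ?_⟩
            show ℓ θ * q j θ / Z / q0 θ ≤ M * Mk / Z
            have h1 : ℓ θ * q j θ / Z / q0 θ = ℓ θ * (q j θ / q0 θ) / Z := by
              field_simp
            rw [h1]
            have h2 : ℓ θ * (q j θ / q0 θ) ≤ M * Mk :=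
              mul_le_mul (hℓM θ) (hMk θ) (div_pos (hqkpos θ) (hq0pos θ)).le
                ((hℓpos θ).le.trans (hℓM θ))
            exact div_le_div_of_nonneg_right h2 hZpos.le
        · rw [hq', Function.update_of_ne hne]
          exact hq j
      obtain ⟨hFi, hFpos, hFIpos⟩ := Fm_facts hμ hq0meas hq0pos hq0i hq
      set F : Θ → ℝ := fun θ => q0 θ ^ ((1 : ℝ) - K) * ∏ k, q k θ with hF
      set IF : ℝ := ∫ x, F x ∂μ with hIF
      have hℓF : Integrable (fun x => ℓ x * F x) μ :=
        hFi.bdd_mul hℓmeas.aestronglyMeasurable (Filter.Eventually.of_forall hℓnorm.choose_spec)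
      set IL : ℝ := ∫ x, ℓ x * F x ∂μ with hIL
      have hILpos : 0 < IL :=
        integral_pos_of_pos hμ hℓF (fun x => mul_pos (hℓpos x) (hFpos x))
      have hgq : g q =ᵐ[μ] fun θ => IF⁻¹ * F θ := hmul q hq
      have hgq' : g q' =ᵐ[μ] fun θ =>
          (∫ x, q0 x ^ ((1 : ℝ) - K) * ∏ j, q' j x ∂μ)⁻¹ *
            (q0 θ ^ ((1 : ℝ) - K) * ∏ j, q' j θ) := hmul q' hadm'
      have hprod : ∀ x, q0 x ^ ((1 : ℝ) - K) * ∏ j, q' j x = Z⁻¹ * (ℓ x * F x) := by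
        intro x
        rw [hq', prod_update_apply]
        have h2 : ∏ j, q j x = q k x * ∏ j ∈ Finset.univ.erase k, q j x :=
          (Finset.mul_prod_erase _ _ (Finset.mem_univ k)).symm
        show q0 x ^ ((1 : ℝ) - K) * (ℓ x * q k x / Z * ∏ j ∈ Finset.univ.erase k, q j x) = _
        rw [hF]
        simp only [h2]
        rw [div_eq_mul_inv]
        ring
      have hIq' : ∫ x, q0 x ^ ((1 : ℝ) - K) * ∏ j, q' j x ∂μ = Z⁻¹ * IL := by
        rw [show (fun x => q0 x ^ ((1 : ℝ) - K) * ∏ j, q' j x) =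
            fun x => Z⁻¹ * (ℓ x * F x) from funext hprod, integral_const_mul]
      have hDq : ∫ x, ℓ x * g q x ∂μ = IF⁻¹ * IL := by
        have h1 : (fun x => ℓ x * g q x) =ᵐ[μ] fun x => IF⁻¹ * (ℓ x * F x) := by
          filter_upwards [hgq] with x hx
          rw [hx]; ring
        rw [integral_congr_ae h1, integral_const_mul]
      have hIFpos : 0 < IF := hFIpos
      filter_upwards [hgq', hgq] with θ h1 h2
      rw [h1]
      simp only [bayesUpdate]
      rw [hDq, h2, hIq', hprod θ]
      field_simp
    · have hadm0 : IsAdmissible μ q0 (fun _ : Fin K => q0) := fun k =>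
        ⟨hq0meas, hq0pos, hq0int, 1, fun θ => (div_self (hq0pos θ).ne').le⟩
      have h := hmul _ hadm0
      have hpt : ∀ x : Θ, q0 x ^ ((1 : ℝ) - K) * ∏ _k : Fin K, q0 x = q0 x := by
        intro x
        rw [Finset.prod_const, Finset.card_univ, Fintype.card_fin,
          ← Real.rpow_natCast (q0 x) K, ← Real.rpow_add (hq0pos x)]
        norm_num
      have hI : ∫ x, q0 x ^ ((1 : ℝ) - K) * ∏ _k : Fin K, q0 x ∂μ = 1 := by
        rw [show (fun x => q0 x ^ ((1 : ℝ) - K) * ∏ _k : Fin K, q0 x) = q0 from funext hpt]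
        exact hq0int
      refine h.trans (Filter.Eventually.of_forall fun θ => ?_)
      show (∫ x, q0 x ^ ((1 : ℝ) - K) * ∏ _k : Fin K, q0 x ∂μ)⁻¹ *
          (q0 θ ^ ((1 : ℝ) - K) * ∏ _k : Fin K, q0 θ) = q0 θ
      rw [hI, hpt θ]
      norm_num
end

section
/- Scalar supra-Bayesian Gaussian fusion is a weighted log-linear pool: let y_k = h_k θ + n_k with h_k ∈ ℝ^{d_k} nonzero, n = (n_1,…,n_K) zero-mean Gaussian with block covariance Σ (blocks Σ_{kk'}, each Σ_{kk} positive definite), local statistics t_k = vₖᵀ y_k with vₖᵀ = (h_kᵀ Σ_{kk}^{-1} h_k)^{-1} h_kᵀ Σ_{kk}^{-1}, and Σ̃ = V Σ Vᵀ nonsingular where V = diag(v₁ᵀ,…,v_Kᵀ). Define local likelihoods ℓ_k(θ) ∝ exp(−(θ h_k − y_k)ᵀ Σ_{kk}^{-1} (θ h_k − y_k)/2) and global t-likelihood λ(θ) ∝ exp(−(t − 1_K θ)ᵀ Σ̃^{-1} (t − 1_K θ)/2). Then λ(θ) ∝ ∏_{k=1}^K ℓ_k(θ)^{w_k} as functions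 of θ, with w_k = (1_Kᵀ Σ̃^{-1} e_k)/(h_kᵀ Σ_{kk}^{-1} h_k). -/
open Matrix

private lemma dot_swap {m : Type*} [Fintype m] (M : Matrix m m ℝ) (hM : Mᵀ = M)
    (x y : m → ℝ) : dotProduct y (M.mulVec x) = dotProduct x (M.mulVec y) := by
  rw [Matrix.dotProduct_mulVec, ← Matrix.mulVec_transpose, hM, dotProduct_comm]

private lemma quad_expand {m : Type*} [Fintype m] (M : Matrix m m ℝ) (hM : Mᵀ = M)
    (x y : m → ℝ) (θ : ℝ) :
    dotProduct (θ • x - y) (M.mulVec (θ • x - y)) =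
      θ^2 * dotProduct x (M.mulVec x)
      - 2*θ* dotProduct x (M.mulVec y)
      + dotProduct y (M.mulVec y) := by
  simp [sub_dotProduct, dotProduct_sub, Matrix.mulVec_sub, Matrix.mulVec_smul,
    smul_dotProduct, dotProduct_smul, smul_eq_mul, dot_swap M hM x y]
  ring

/-- Scalar supra-Bayesian Gaussian fusion is a weighted log-linear pool:
with local statistics `t_k = v_kᵀ y_k`, `Σ̃ = V Σ Vᵀ` nonsingular, the global
t-likelihood satisfies `λ(θ) ∝ ∏_k ℓ_k(θ)^{w_k}` with
`w_k = (1_Kᵀ Σ̃⁻¹ e_k)/(h_kᵀ Σ_{kk}⁻¹ h_k)`. -/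
theorem scalar_supra_bayesian_gaussian_fusion
    {K : ℕ} (d : Fin K → ℕ)
    (Sfull : Matrix ((k : Fin K) × Fin (d k)) ((k : Fin K) × Fin (d k)) ℝ)
    (hSsymm : Sfull.IsSymm)
    (hvec : (k : Fin K) → Fin (d k) → ℝ) (hne : ∀ k, hvec k ≠ 0)
    (y : (k : Fin K) → Fin (d k) → ℝ)
    (hblk : ∀ k,
      (Matrix.of fun i j => Sfull ⟨k, i⟩ ⟨k, j⟩ :
        Matrix (Fin (d k)) (Fin (d k)) ℝ).PosDef) :
    (let Skk : (k : Fin K) → Matrix (Fin (d k)) (Fin (d k)) ℝ :=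
      fun k => Matrix.of fun i j => Sfull ⟨k, i⟩ ⟨k, j⟩
     -- a k = h_kᵀ Σ_{kk}⁻¹ h_k
     let a : Fin K → ℝ :=
      fun k => dotProduct (hvec k) ((Skk k)⁻¹.mulVec (hvec k))
     -- v_kᵀ = (h_kᵀ Σ_{kk}⁻¹ h_k)⁻¹ h_kᵀ Σ_{kk}⁻¹ (as a column vector, using symmetry)
     let v : (k : Fin K) → Fin (d k) → ℝ :=
      fun k => (a k)⁻¹ • ((Skk k)⁻¹.mulVec (hvec k))
     -- local statistics t_k = v_kᵀ y_k
     let t : Fin K → ℝ := fun k => dotProduct (v k) (y k)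
     -- Σ̃ = V Σ Vᵀ, blockwise: Σ̃_{kk'} = v_kᵀ Σ_{kk'} v_{k'}
     let Stil : Matrix (Fin K) (Fin K) ℝ :=
      Matrix.of fun k k' => dotProduct (v k)
        ((Matrix.of fun i j => Sfull ⟨k, i⟩ ⟨k', j⟩ :
          Matrix (Fin (d k)) (Fin (d k')) ℝ).mulVec (v k'))
     -- weights w_k = (1_Kᵀ Σ̃⁻¹ e_k) / a_k
     let w : Fin K → ℝ := fun k => (∑ j, Stil⁻¹ j k) / a k
     -- local observation likelihoods ℓ_k(θ) ∝ exp(−(θh_k − y_k)ᵀ Σ_{kk}⁻¹ (θh_k − y_k)/2)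
     let ℓ : Fin K → ℝ → ℝ := fun k θ =>
      Real.exp (-(dotProduct (θ • hvec k - y k)
        ((Skk k)⁻¹.mulVec (θ • hvec k - y k))) / 2)
     -- global t-likelihood λ(θ) ∝ exp(−(t − θ1_K)ᵀ Σ̃⁻¹ (t − θ1_K)/2)
     let lam : ℝ → ℝ := fun θ =>
      Real.exp (-(dotProduct (t - θ • (1 : Fin K → ℝ))
        (Stil⁻¹.mulVec (t - θ • (1 : Fin K → ℝ)))) / 2)
     IsUnit Stil.det →
       ∃ c : ℝ, 0 < c ∧ ∀ θ : ℝ, lam θ = c * ∏ k, ℓ k θ ^ w k) := by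
  intro Skk a v t Stil w ℓ lam hdet
  -- basic symmetry facts
  have hSkkT : ∀ k, (Skk k)ᵀ = Skk k := by
    intro k; ext i j
    simpa [Matrix.transpose_apply, Skk] using hSsymm.apply (⟨k, i⟩ : (k : Fin K) × Fin (d k)) ⟨k, j⟩
  have hIT : ∀ k, ((Skk k)⁻¹)ᵀ = (Skk k)⁻¹ := by
    intro k; rw [Matrix.transpose_nonsing_inv, hSkkT]
  have ha : ∀ k, 0 < a k := by
    intro k
    have hpd : ((Skk k)⁻¹).PosDef := (hblk k).inv
    simpa using hpd.dotProduct_mulVec_pos (hne k)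
  have ha0 : ∀ k, a k ≠ 0 := fun k => (ha k).ne'
  -- Stil is symmetric
  have hStilT : Stilᵀ = Stil := by
    ext k k'
    show Stil k' k = Stil k k'
    show dotProduct (v k')
        ((Matrix.of fun i j => Sfull ⟨k', i⟩ ⟨k, j⟩ :
          Matrix (Fin (d k')) (Fin (d k)) ℝ).mulVec (v k)) =
      dotProduct (v k)
        ((Matrix.of fun i j => Sfull ⟨k, i⟩ ⟨k', j⟩ :
          Matrix (Fin (d k)) (Fin (d k')) ℝ).mulVec (v k'))
    have hT : (Matrix.of fun i j => Sfull ⟨k', i⟩ ⟨k, j⟩ :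
          Matrix (Fin (d k')) (Fin (d k)) ℝ) =
        (Matrix.of fun i j => Sfull ⟨k, i⟩ ⟨k', j⟩ :
          Matrix (Fin (d k)) (Fin (d k')) ℝ)ᵀ := by
      ext i j
      simpa [Matrix.transpose_apply] using
        hSsymm.apply (⟨k, j⟩ : (k : Fin K) × Fin (d k)) ⟨k', i⟩
    rw [hT, Matrix.mulVec_transpose, dotProduct_comm, ← Matrix.dotProduct_mulVec]
  have huT : (Stil⁻¹)ᵀ = Stil⁻¹ := by
    rw [Matrix.transpose_nonsing_inv, hStilT]
  -- abbreviations
  set u := Stil⁻¹ with hu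
  set B : Fin K → ℝ := fun k => dotProduct (hvec k) ((Skk k)⁻¹.mulVec (y k)) with hBdef
  set C : Fin K → ℝ := fun k => dotProduct (y k) ((Skk k)⁻¹.mulVec (y k)) with hCdef
  have hB : ∀ k, B k = a k * t k := by
    intro k
    have h2 : dotProduct ((Skk k)⁻¹.mulVec (hvec k)) (y k) = B k := by
      rw [dotProduct_comm]
      exact dot_swap ((Skk k)⁻¹) (hIT k) (hvec k) (y k)
    show _ = a k * dotProduct ((a k)⁻¹ • ((Skk k)⁻¹.mulVec (hvec k))) (y k)
    rw [smul_dotProduct, h2, smul_eq_mul, ← mul_assoc,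
      mul_inv_cancel₀ (ha0 k), one_mul]
  -- scalars
  set P : ℝ := dotProduct (1 : Fin K → ℝ) (u.mulVec (1 : Fin K → ℝ)) with hP
  set Q : ℝ := dotProduct (1 : Fin K → ℝ) (u.mulVec t) with hQ
  set R : ℝ := dotProduct t (u.mulVec t) with hR
  -- weight identities
  have hwa : ∀ k, w k * a k = ∑ j, u j k := by
    intro k
    show (∑ j, u j k) / a k * a k = _
    field_simp [ha0 k]
  have hPsum : P = ∑ k, w k * a k := by
    have : P = ∑ j, ∑ k, u j k := by
      simp [hP, dotProduct, Matrix.mulVec]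
    rw [this, Finset.sum_comm (f := fun j k => u j k)]
    exact Finset.sum_congr rfl fun k _ => (hwa k).symm
  have hQsum : Q = ∑ k, w k * B k := by
    have h1 : Q = ∑ j, ∑ k, u j k * t k := by
      simp [hQ, dotProduct, Matrix.mulVec]
    rw [h1, Finset.sum_comm (f := fun j k => u j k * t k)]
    refine Finset.sum_congr rfl fun k _ => ?_
    rw [hB k, ← mul_assoc, hwa k, Finset.sum_mul]
  -- the constant
  refine ⟨Real.exp (((∑ k, w k * C k) - R)/2), Real.exp_pos _, fun θ => ?_⟩
  -- rewrite lam
  have hlam : lam θ = Real.exp (-(θ^2*P - 2*θ*Q + R)/2) := by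
    show Real.exp _ = _
    congr 1
    have hneg : t - θ • (1 : Fin K → ℝ) = -(θ • (1 : Fin K → ℝ) - t) := by abel
    rw [hneg, Matrix.mulVec_neg, neg_dotProduct, dotProduct_neg, neg_neg,
      quad_expand u huT (1 : Fin K → ℝ) t θ]
  have hell : ∀ k, ℓ k θ ^ w k =
      Real.exp ((-(θ^2 * a k - 2*θ*(B k) + C k)/2) * w k) := by
    intro k
    show Real.exp _ ^ w k = _
    rw [← Real.exp_mul]
    congr 1
    rw [quad_expand ((Skk k)⁻¹) (hIT k) (hvec k) (y k) θ]
  rw [hlam]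
  calc Real.exp (-(θ^2*P - 2*θ*Q + R)/2)
      = Real.exp (((∑ k, w k * C k) - R)/2) *
        Real.exp (∑ k, (-(θ^2 * a k - 2*θ*(B k) + C k)/2) * w k) := by
        rw [← Real.exp_add]
        congr 1
        have hs : ∑ k, (-(θ^2 * a k - 2*θ*(B k) + C k)/2) * w k
            = ∑ k, (w k * a k * (-(θ^2)/2) + w k * B k * θ + w k * C k * (-(1:ℝ)/2)) := by
          refine Finset.sum_congr rfl fun k _ => ?_; ring
        rw [hs, Finset.sum_add_distrib, Finset.sum_add_distrib,
          ← Finset.sum_mul, ← Finset.sum_mul, ← Finset.sum_mul,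
          ← hPsum, ← hQsum]
        ring
    _ = Real.exp (((∑ k, w k * C k) - R)/2) * ∏ k, ℓ k θ ^ w k := by
        rw [Real.exp_sum]
        congr 1
        exact Finset.prod_congr rfl fun k _ => (hell k).symm
end

section
/- In the private/shared observation model, the supra-Bayesian weights are w_k = 1 − ((K−1)/r_k)(Σ_{k'=0}^K 1/r_{k'})^{-1}: consider the K×K matrix Σ̃ with diagonal entries Σ̃_{kk} = 1/(r_0 + r_k) and off-diagonal entries Σ̃_{kk'} = r_0/((r_0+r_k)(r_0+r_{k'})), where r_0, r_1, …, r_K are positive integers. Then Σ̃ is invertible and w_k := (1_Kᵀ Σ̃^{-1} e_k)/(r_0 + r_k) equals 1 − ((K−1)/r_k)(Σ_{k'=0}^K 1/r_{k'})^{-1}. -/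
open Matrix

set_option maxHeartbeats 1000000

/-- In the private/shared observation model, the supra-Bayesian weights
are `w_k = 1 − ((K−1)/r_k)(Σ_{k'=0}^K 1/r_{k'})⁻¹`, where `Σ̃` has diagonal entries
`1/(r_0+r_k)` and off-diagonal entries `r_0/((r_0+r_k)(r_0+r_{k'}))`. -/
theorem private_shared_observation_weights
    {K : ℕ} (r0 : ℕ) (r : Fin K → ℕ) (hr0 : 0 < r0) (hr : ∀ k, 0 < r k) :
    (let Stil : Matrix (Fin K) (Fin K) ℝ :=
      Matrix.of fun k k' =>
        if k = k' then 1 / ((r0 : ℝ) + (r k : ℝ))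
        else (r0 : ℝ) / (((r0 : ℝ) + (r k : ℝ)) * ((r0 : ℝ) + (r k' : ℝ)))
     IsUnit Stil.det ∧
       ∀ k, (∑ j, Stil⁻¹ j k) / ((r0 : ℝ) + (r k : ℝ)) =
         1 - (((K : ℝ) - 1) / (r k : ℝ)) *
           (((r0 : ℝ)⁻¹ + ∑ k', ((r k' : ℝ))⁻¹)⁻¹)) := by
  intro Stil
  obtain ⟨b, hb⟩ : ∃ b : Fin K → ℝ, ∀ k, b k = (r0:ℝ) + (r k : ℝ) := ⟨_, fun _ => rfl⟩
  have hStil : ∀ i j, Stil i j =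
      if i = j then 1 / b i else (r0 : ℝ) / (b i * b j) := by
    intro i j
    simp only [hb]
    rfl
  clear_value Stil
  have hr0' : (0:ℝ) < (r0:ℝ) := by exact_mod_cast hr0
  have hr0ne : (r0:ℝ) ≠ 0 := ne_of_gt hr0'
  have hrk : ∀ k, (0:ℝ) < (r k : ℝ) := fun k => by exact_mod_cast hr k
  have hrkne : ∀ k, (r k : ℝ) ≠ 0 := fun k => ne_of_gt (hrk k)
  have hbpos : ∀ k, 0 < b k := fun k => by rw [hb]; positivity
  have hbne : ∀ k, b k ≠ 0 := fun k => ne_of_gt (hbpos k)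
  obtain ⟨T, hT_def⟩ : ∃ T : ℝ, T = ∑ j, ((r j : ℝ))⁻¹ := ⟨_, rfl⟩
  have hTnn : 0 ≤ T := hT_def ▸ Finset.sum_nonneg fun j _ => by positivity
  obtain ⟨S, hS_def⟩ : ∃ S : ℝ, S = (r0:ℝ)⁻¹ + T := ⟨_, rfl⟩
  have hSpos : 0 < S := by
    have h1 : 0 < (r0:ℝ)⁻¹ := by positivity
    rw [hS_def]; linarith
  have hSne : S ≠ 0 := ne_of_gt hSpos
  have hTS : T = S - (r0:ℝ)⁻¹ := by rw [hS_def]; ring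
  set M : Matrix (Fin K) (Fin K) ℝ := Matrix.of fun j k =>
    (if j = k then (b j)^2 / (r j : ℝ) else 0)
      - b j * b k / (S * (r j : ℝ) * (r k : ℝ)) with hM_def
  have hM : ∀ j k, M j k =
      (if j = k then (b j)^2 / (r j : ℝ) else 0)
      - b j * b k / (S * (r j : ℝ) * (r k : ℝ)) := fun j k => rfl
  clear_value M
  have hmul : Stil * M = 1 := by
    ext i k
    have hbi := hbne i
    have hbk := hbne k
    have hri := hrkne i
    have hrk' := hrkne k
    rw [Matrix.mul_apply, Matrix.one_apply]
    have expand : ∀ j, Stil i j * M j k =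
        (if i = j then (r j : ℝ) / (b j)^2 * M j k else 0)
        + (if j = k then (r0:ℝ) * b j / (b i * (r j : ℝ)) else 0)
        + (-((r0:ℝ) * b k) / (b i * S * (r k : ℝ))) * ((r j : ℝ))⁻¹ := by
      intro j
      have hbj := hbne j
      have hrj := hrkne j
      rw [hStil, hM]
      rcases eq_or_ne i j with hij | hij
      · subst hij
        rcases eq_or_ne i k with hik | hik
        · subst hik
          simp only [if_pos rfl, if_true]
          field_simp
          rw [hb i]; ring
        · simp only [if_pos rfl, if_neg hik, if_true]
          field_simp
          rw [hb i]; ring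
      · rcases eq_or_ne j k with hjk | hjk
        · subst hjk
          simp only [if_neg hij, if_pos rfl, if_true]
          field_simp
          ring
        · simp only [if_neg hij, if_neg hjk]
          field_simp
          ring
    rw [Finset.sum_congr rfl fun j _ => expand j, Finset.sum_add_distrib,
      Finset.sum_add_distrib, ← Finset.mul_sum, Finset.sum_ite_eq, Finset.sum_ite_eq',
      ← hT_def]
    simp only [Finset.mem_univ, if_true]
    rw [hM, hTS]
    rcases eq_or_ne i k with hik | hik
    · subst hik
      simp only [if_pos rfl, if_true]
      field_simp
      ring
    · simp only [if_neg hik]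
      field_simp
      ring
  have hdet : IsUnit Stil.det := Matrix.isUnit_det_of_right_inverse hmul
  have hinv : Stil⁻¹ = M := Matrix.inv_eq_right_inv hmul
  refine ⟨hdet, fun k => ?_⟩
  rw [hinv]
  have h1 : ∑ j, b j / (r j : ℝ) = (K:ℝ) + (r0:ℝ) * T := by
    have h2 : ∀ j ∈ Finset.univ, b j / (r j : ℝ)
        = 1 + (r0:ℝ) * ((r j : ℝ))⁻¹ := fun j _ => by
      have hrj := hrkne j
      rw [hb]; field_simp; ring
    rw [Finset.sum_congr rfl h2, Finset.sum_add_distrib, ← Finset.mul_sum, ← hT_def]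
    simp
  have hsum : ∑ j, M j k = (b k)^2 / (r k : ℝ)
      - b k / (S * (r k : ℝ)) * ((K:ℝ) + (r0:ℝ) * T) := by
    have h3 : ∀ j ∈ Finset.univ, M j k =
        (if j = k then (b j)^2 / (r j : ℝ) else 0)
        - b k / (S * (r k : ℝ)) * (b j / (r j : ℝ)) := by
      intro j _
      have hbj := hbne j
      have hbk := hbne k
      have hrj := hrkne j
      have hrk' := hrkne k
      rw [hM]
      field_simp
    rw [Finset.sum_congr rfl h3, Finset.sum_sub_distrib, ← Finset.mul_sum,
      Finset.sum_ite_eq', h1]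
    simp
  have hbk := hbne k
  have hrk' := hrkne k
  rw [hsum, hTS, ← hb k, ← hT_def, ← hS_def]
  field_simp
  rw [hb k]; ring
end
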